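/- Let q ≥ 2, let 𝒯 be an SLP representing T, and suppose X_j is a right q-gram neighbor of X_i. If |val(X_{r(i)})| < q, then i = rm_q(X_{ℓ(j)}), i.e., X_i is the label of the deepest node on the rightmost path of the derivation subtree rooted at a node labeled X_{ℓ(j)} whose derived string has length at least q; in particular, in this case the left q-gram neighbor of X_j is uniquely determined, and moreover |val(X_{ℓ(j)})| ≥ q. -/
import Mathlib


/-- A straight line program over alphabet `α`: variables are `Fin n` (variable
`X_i` of the paper corresponds to index `i-1`), each with either a terminal
rule (a single character) or a nonterminal rule `X_i → X_j X_k` with `j,k < i`. -/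
structure SLP (α : Type) where
  n : ℕ
  npos : 0 < n
  rule : Fin n → α ⊕ (Fin n × Fin n)
  wf : ∀ i jk, rule i = Sum.inr jk → jk.1 < i ∧ jk.2 < i

namespace SLP

variable {α : Type}

/-- the string `val(X_i)` derived by a variable -/
def val (S : SLP α) (i : Fin S.n) : List α :=
  match h : S.rule i with
  | Sum.inl a => [a]
  | Sum.inr jk =>
    have _h1 := (S.wf i jk h).1
    have _h2 := (S.wf i jk h).2
    S.val jk.1 ++ S.val jk.2
termination_by i.val

/-- the last variable `X_n` -/
def lastIdx (S : SLP α) : Fin S.n := ⟨S.n - 1, Nat.sub_lt S.npos Nat.one_pos⟩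

/-- the string `T` represented by the SLP -/
def text (S : SLP α) : List α := S.val S.lastIdx

/-- `T([i:j])`: the (1-based, inclusive) substring of a string -/
def substr (T : List α) (i j : ℕ) : List α := (T.drop (i - 1)).take (j + 1 - i)

/-- `pre(T,q)` -/
def spre (T : List α) (q : ℕ) : List α := T.take q

/-- `suf(T,q)` -/
def ssuf (T : List α) (q : ℕ) : List α := T.drop (T.length - q)

/-- `pre([b:e],q)` for intervals of positions -/
def ipre (b e q : ℕ) : Finset ℕ := Finset.Icc b (min (b + q - 1) e)

/-- `suf([b:e],q)` for intervals of positions -/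
def isuf (b e q : ℕ) : Finset ℕ := Finset.Icc (max b (e + 1 - q)) e

/-- `Occ(T,P)`: the set of (1-based) occurrences of `P` in `T` -/
def Occ [DecidableEq α] (T P : List α) : Finset ℕ :=
  (Finset.Icc 1 T.length).filter fun k => substr T k (k + P.length - 1) = P

/-- the multiset of labels of the nodes of the derivation tree rooted at
a node labeled `X_i` -/
def occsFrom (S : SLP α) (i : Fin S.n) : Multiset (Fin S.n) :=
  match h : S.rule i with
  | Sum.inl _ => {i}
  | Sum.inr jk =>
    have _h1 := (S.wf i jk h).1
    have _h2 := (S.wf i jk h).2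
    i ::ₘ (S.occsFrom jk.1 + S.occsFrom jk.2)
termination_by i.val

/-- `vOcc(X_i)`: the number of nodes of the derivation tree labeled `X_i` -/
def vOcc (S : SLP α) (i : Fin S.n) : ℕ := (S.occsFrom S.lastIdx).count i

/-- the string `t_i = suf(val(X_{ℓ(i)}),q-1) pre(val(X_{r(i)}),q-1)`
(and `[]` for a terminal rule) -/
def tstr (S : SLP α) (q : ℕ) (i : Fin S.n) : List α :=
  match S.rule i with
  | Sum.inl _ => []
  | Sum.inr jk => ssuf (S.val jk.1) (q - 1) ++ spre (S.val jk.2) (q - 1)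

/-- `label(X_i) = t_i([q:|t_i|])` -/
def labelStr (S : SLP α) (q : ℕ) (i : Fin S.n) : List α := (S.tstr q i).drop (q - 1)

/-- Nodes of the derivation tree are represented by the path from the root
(`false` = go to left child, `true` = go to right child).  `descend i p`
returns the label of the node reached from a node labeled `X_i` by path `p`. -/
def descend (S : SLP α) : Fin S.n → List Bool → Option (Fin S.n)
  | i, [] => some i
  | i, b :: p =>
    match S.rule i with
    | Sum.inl _ => none
    | Sum.inr jk => S.descend (if b then jk.2 else jk.1) p

/-- the label of the node of the derivation tree reached by path `p` from the root -/
def nodeVar (S : SLP α) (p : List Bool) : Option (Fin S.n) := S.descend S.lastIdx p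

/-- `p` is a valid node of the derivation tree -/
def IsNode (S : SLP α) (p : List Bool) : Prop := (S.nodeVar p).isSome

/-- the 0-based offset in `val(X_i)` of the part derived below path `p` -/
def offsetFrom (S : SLP α) : Fin S.n → List Bool → ℕ
  | _, [] => 0
  | i, b :: p =>
    match S.rule i with
    | Sum.inl _ => 0
    | Sum.inr jk =>
      if b then (S.val jk.1).length + S.offsetFrom jk.2 p
      else S.offsetFrom jk.1 p

/-- the 0-based offset in `T` of the interval derived by node `p` -/
def offset (S : SLP α) (p : List Bool) : ℕ := S.offsetFrom S.lastIdx p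

/-- `itv(v)`: the (1-based) interval of positions of `T` derived by node `p` -/
def itv (S : SLP α) (p : List Bool) : Finset ℕ :=
  match S.nodeVar p with
  | some i => Finset.Icc (S.offset p + 1) (S.offset p + (S.val i).length)
  | none => ∅

/-- `p = ξ(b,e)`: `p` is the deepest node whose interval contains `[b:e]`,
i.e. `itv(p) ⊇ [b:e]` and no proper descendant of `p` satisfies this. -/
def Stabs (S : SLP α) (p : List Bool) (b e : ℕ) : Prop :=
  S.IsNode p ∧ Finset.Icc b e ⊆ S.itv p ∧
  ∀ p' : List Bool, p <+: p' → p ≠ p' → S.IsNode p' → ¬ Finset.Icc b e ⊆ S.itv p'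

/-- `X_j` is a right `q`-gram neighbor of `X_i` -/
def RightNbr (S : SLP α) (q : ℕ) (i j : Fin S.n) : Prop :=
  i ≠ j ∧ ∃ u p p', 1 ≤ u ∧ u + q ≤ S.text.length ∧
    S.Stabs p u (u + q - 1) ∧ S.nodeVar p = some i ∧
    S.Stabs p' (u + 1) (u + q) ∧ S.nodeVar p' = some j

/-- `lm_q(X_i)`: the last variable of length `≥ q` on the sequence `i, ℓ(i), ℓ(ℓ(i)), …`
(meaningful when `|val(X_i)| ≥ q`) -/
def lm (S : SLP α) (q : ℕ) (i : Fin S.n) : Fin S.n :=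
  match h : S.rule i with
  | Sum.inl _ => i
  | Sum.inr jk =>
    have := (S.wf i jk h).1
    if (S.val jk.1).length < q then i else S.lm q jk.1
termination_by i.val

/-- `rm_q(X_i)`: the last variable of length `≥ q` on the sequence `i, r(i), r(r(i)), …` -/
def rm (S : SLP α) (q : ℕ) (i : Fin S.n) : Fin S.n :=
  match h : S.rule i with
  | Sum.inl _ => i
  | Sum.inr jk =>
    have := (S.wf i jk h).2
    if (S.val jk.2).length < q then i else S.rm q jk.2
termination_by i.val

/-- `lm_q` returning `null` (`none`) when `|val(X_i)| < q` -/
def lmOpt (S : SLP α) (q : ℕ) (i : Fin S.n) : Option (Fin S.n) :=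
  if (S.val i).length < q then none else some (S.lm q i)

/-- `rm_q` returning `null` (`none`) when `|val(X_i)| < q` -/
def rmOpt (S : SLP α) (q : ℕ) (i : Fin S.n) : Option (Fin S.n) :=
  if (S.val i).length < q then none else some (S.rm q i)

/-- `LSpine S i k`: `k` occurs in the sequence `i, ℓ(i), ℓ(ℓ(i)), …`
(the leftmost path of the derivation subtree rooted at a node labeled `X_i`) -/
inductive LSpine (S : SLP α) : Fin S.n → Fin S.n → Prop
  | refl (i : Fin S.n) : LSpine S i i
  | step {i k : Fin S.n} {jk : Fin S.n × Fin S.n} :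
      S.rule i = Sum.inr jk → LSpine S jk.1 k → LSpine S i k

end SLP

namespace SLP

variable {α : Type} (S : SLP α)

theorem val_inl {i : Fin S.n} {a : α} (h : S.rule i = Sum.inl a) :
    S.val i = [a] := by
  rw [val]; split <;> simp_all

theorem val_inr {i : Fin S.n} {jk : Fin S.n × Fin S.n} (h : S.rule i = Sum.inr jk) :
    S.val i = S.val jk.1 ++ S.val jk.2 := by
  rw [val]; split <;> simp_all

theorem val_length_pos (i : Fin S.n) : 0 < (S.val i).length := by
  rcases h : S.rule i with a | jk
  · rw [S.val_inl h]; simp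
  · have := (S.wf i jk h).1
    have ih := val_length_pos jk.1
    rw [S.val_inr h]; simp only [List.length_append]; omega
termination_by i.val

theorem descend_nil (k : Fin S.n) : S.descend k [] = some k := rfl

theorem descend_cons {k : Fin S.n} {jk : Fin S.n × Fin S.n}
    (h : S.rule k = Sum.inr jk) (b : Bool) (s : List Bool) :
    S.descend k (b :: s) = S.descend (if b then jk.2 else jk.1) s := by
  rw [descend, h]

theorem descend_cons_inl {k : Fin S.n} {a : α}
    (h : S.rule k = Sum.inl a) (b : Bool) (s : List Bool) :
    S.descend k (b :: s) = none := by
  rw [descend, h]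

theorem offsetFrom_nil (k : Fin S.n) : S.offsetFrom k [] = 0 := rfl

theorem offsetFrom_cons {k : Fin S.n} {jk : Fin S.n × Fin S.n}
    (h : S.rule k = Sum.inr jk) (b : Bool) (s : List Bool) :
    S.offsetFrom k (b :: s) =
      if b then (S.val jk.1).length + S.offsetFrom jk.2 s else S.offsetFrom jk.1 s := by
  rw [offsetFrom, h]

theorem descend_append (k : Fin S.n) (s t : List Bool) :
    S.descend k (s ++ t) = (S.descend k s).bind (fun m => S.descend m t) := by
  induction s generalizing k with
  | nil => simp [descend_nil]
  | cons b s ih =>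
    rcases h : S.rule k with a | jk
    · simp [S.descend_cons_inl h]
    · rw [List.cons_append, S.descend_cons h, S.descend_cons h, ih]

theorem offsetFrom_append (k : Fin S.n) (s t : List Bool) {m : Fin S.n}
    (h : S.descend k s = some m) :
    S.offsetFrom k (s ++ t) = S.offsetFrom k s + S.offsetFrom m t := by
  induction s generalizing k with
  | nil =>
    rw [descend_nil] at h
    cases h
    simp [offsetFrom_nil]
  | cons b s ih =>
    rcases hr : S.rule k with a | jk
    · rw [S.descend_cons_inl hr] at h; cases h
    · rw [S.descend_cons hr] at h
      rw [List.cons_append, S.offsetFrom_cons hr, S.offsetFrom_cons hr]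
      cases b
      · rw [if_neg Bool.false_ne_true] at h ⊢
        exact ih _ h
      · rw [if_pos rfl] at h
        rw [if_pos rfl, if_pos rfl]
        rw [ih _ h]; omega

theorem offsetFrom_add_length_le (k : Fin S.n) (s : List Bool) {m : Fin S.n}
    (h : S.descend k s = some m) :
    S.offsetFrom k s + (S.val m).length ≤ (S.val k).length := by
  induction s generalizing k with
  | nil => rw [descend_nil] at h; cases h; simp [offsetFrom_nil]
  | cons b s ih =>
    rcases hr : S.rule k with a | jk
    · rw [S.descend_cons_inl hr] at h; cases h
    · rw [S.descend_cons hr] at h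
      rw [S.offsetFrom_cons hr, S.val_inr hr, List.length_append]
      cases b
      · rw [if_neg Bool.false_ne_true] at h ⊢
        have := ih _ h
        omega
      · rw [if_pos rfl] at h ⊢
        have := ih _ h
        omega

theorem rm_inr {i : Fin S.n} {jk : Fin S.n × Fin S.n} (h : S.rule i = Sum.inr jk)
    (q : ℕ) :
    S.rm q i = if (S.val jk.2).length < q then i else S.rm q jk.2 := by
  rw [rm]; split <;> simp_all

theorem rm_eq_of_aligned (q : ℕ) (k : Fin S.n) (s : List Bool) {m : Fin S.n}
    (hd : S.descend k s = some m)
    (hal : S.offsetFrom k s + (S.val m).length = (S.val k).length)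
    (hq : q ≤ (S.val m).length) {jkm : Fin S.n × Fin S.n}
    (hrm : S.rule m = Sum.inr jkm)
    (hlt : (S.val jkm.2).length < q) : S.rm q k = m := by
  induction s generalizing k with
  | nil =>
    rw [descend_nil] at hd; cases hd
    rw [S.rm_inr hrm, if_pos hlt]
  | cons b s ih =>
    rcases hr : S.rule k with a | jk
    · rw [S.descend_cons_inl hr] at hd; cases hd
    · rw [S.descend_cons hr] at hd
      rw [S.offsetFrom_cons hr] at hal
      have hvk := S.val_inr hr
      cases b
      · rw [if_neg Bool.false_ne_true] at hd
        rw [if_neg Bool.false_ne_true] at hal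
        have h1 := S.offsetFrom_add_length_le jk.1 s hd
        have h2 := S.val_length_pos jk.2
        rw [hvk, List.length_append] at hal
        omega
      · rw [if_pos rfl] at hd
        rw [if_pos rfl] at hal
        rw [hvk, List.length_append] at hal
        have hal2 : S.offsetFrom jk.2 s + (S.val m).length = (S.val jk.2).length := by omega
        have hge : q ≤ (S.val jk.2).length := by omega
        rw [S.rm_inr hr, if_neg (by omega)]
        exact ih _ hd hal2

theorem descend_comparable (s1 : List Bool) : ∀ (k : Fin S.n) (s2 : List Bool)
    (m1 m2 : Fin S.n) (x : ℕ),
    S.descend k s1 = some m1 → S.descend k s2 = some m2 →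
    S.offsetFrom k s1 ≤ x → x < S.offsetFrom k s1 + (S.val m1).length →
    S.offsetFrom k s2 ≤ x → x < S.offsetFrom k s2 + (S.val m2).length →
    s1 <+: s2 ∨ s2 <+: s1 := by
  induction s1 with
  | nil => intros; exact Or.inl List.nil_prefix
  | cons b1 t1 ih =>
    intro k s2 m1 m2 x h1 h2 ho1 ho1' ho2 ho2'
    cases s2 with
    | nil => exact Or.inr List.nil_prefix
    | cons b2 t2 =>
      rcases hr : S.rule k with a | jk
      · rw [S.descend_cons_inl hr] at h1; cases h1
      · rw [S.descend_cons hr] at h1 h2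
        rw [S.offsetFrom_cons hr] at ho1 ho1' ho2 ho2'
        cases b1 <;> cases b2
        · rw [if_neg Bool.false_ne_true] at h1 h2
          rw [if_neg Bool.false_ne_true] at ho1 ho1' ho2 ho2'
          rcases ih jk.1 t2 m1 m2 x h1 h2 ho1 ho1' ho2 ho2' with h | h
          · exact Or.inl (List.cons_prefix_cons.mpr ⟨rfl, h⟩)
          · exact Or.inr (List.cons_prefix_cons.mpr ⟨rfl, h⟩)
        · exfalso
          rw [if_neg Bool.false_ne_true] at h1 ho1 ho1'
          rw [if_pos rfl] at ho2 ho2'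
          have := S.offsetFrom_add_length_le jk.1 t1 h1
          omega
        · exfalso
          rw [if_pos rfl] at h1 ho1 ho1'
          rw [if_neg Bool.false_ne_true] at ho2 ho2'
          have := S.offsetFrom_add_length_le jk.1 t2 h2
          omega
        · rw [if_pos rfl] at h1 h2
          rw [if_pos rfl] at ho1 ho1' ho2 ho2'
          rcases ih jk.2 t2 m1 m2 (x - (S.val jk.1).length) h1 h2 (by omega) (by omega)
              (by omega) (by omega) with h | h
          · exact Or.inl (List.cons_prefix_cons.mpr ⟨rfl, h⟩)
          · exact Or.inr (List.cons_prefix_cons.mpr ⟨rfl, h⟩)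

theorem nodeVar_append {p : List Bool} {m : Fin S.n} (h : S.nodeVar p = some m)
    (t : List Bool) : S.nodeVar (p ++ t) = S.descend m t := by
  rw [nodeVar, descend_append, ← nodeVar, h]; rfl

theorem offset_append {p : List Bool} {m : Fin S.n} (h : S.nodeVar p = some m)
    (t : List Bool) : S.offset (p ++ t) = S.offset p + S.offsetFrom m t :=
  S.offsetFrom_append _ _ _ h

theorem itv_eq {p : List Bool} {m : Fin S.n} (h : S.nodeVar p = some m) :
    S.itv p = Finset.Icc (S.offset p + 1) (S.offset p + (S.val m).length) := by
  rw [itv]; split <;> simp_all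

end SLP

namespace SLP

theorem key {α : Type} (S : SLP α) {q : ℕ} (hq : 2 ≤ q) {i j : Fin S.n}
    {jkj : Fin S.n × Fin S.n}
    (hrj : S.rule j = Sum.inr jkj) (hnbr : S.RightNbr q i j) :
    ∃ jki : Fin S.n × Fin S.n, S.rule i = Sum.inr jki ∧
      (((S.val jkj.1).length < q ∧ q ≤ (S.val jki.2).length) ∨
        (i = S.rm q jkj.1 ∧ q ≤ (S.val jkj.1).length)) := by
  obtain ⟨hne, u, p, p', hu, hT, hsp, hvp, hsp', hvp'⟩ := hnbr
  obtain ⟨hnp, hsubp, hmaxp⟩ := hsp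
  obtain ⟨hnp', hsubp', hmaxp'⟩ := hsp'
  rw [S.itv_eq hvp, Finset.Icc_subset_Icc_iff (by omega)] at hsubp
  obtain ⟨hp1, hp2⟩ := hsubp
  rw [S.itv_eq hvp', Finset.Icc_subset_Icc_iff (by omega)] at hsubp'
  obtain ⟨hp1', hp2'⟩ := hsubp'
  have hLi : q ≤ (S.val i).length := by omega
  have hLj : q ≤ (S.val j).length := by omega
  rcases hri : S.rule i with a | jki
  · rw [S.val_inl hri, List.length_singleton] at hLi; omega
  refine ⟨jki, rfl, ?_⟩
  have hlen_i : (S.val i).length = (S.val jki.1).length + (S.val jki.2).length := by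
    rw [S.val_inr hri, List.length_append]
  have hlen_j : (S.val j).length = (S.val jkj.1).length + (S.val jkj.2).length := by
    rw [S.val_inr hrj, List.length_append]
  -- children of p
  have hnl : S.nodeVar (p ++ [false]) = some jki.1 := by
    rw [S.nodeVar_append hvp, S.descend_cons hri, if_neg Bool.false_ne_true, descend_nil]
  have hol : S.offset (p ++ [false]) = S.offset p := by
    rw [S.offset_append hvp, S.offsetFrom_cons hri, if_neg Bool.false_ne_true,
      offsetFrom_nil]; omega
  have hnr : S.nodeVar (p ++ [true]) = some jki.2 := by
    rw [S.nodeVar_append hvp, S.descend_cons hri, if_pos rfl, descend_nil]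
  have hor : S.offset (p ++ [true]) = S.offset p + (S.val jki.1).length := by
    rw [S.offset_append hvp, S.offsetFrom_cons hri, if_pos rfl, offsetFrom_nil]; omega
  have hmaxl := hmaxp (p ++ [false]) (List.prefix_append _ _)
    (fun h => by simpa using congrArg List.length h) (by simp [IsNode, hnl])
  rw [S.itv_eq hnl, hol, Finset.Icc_subset_Icc_iff (by omega)] at hmaxl
  have hA : S.offset p + (S.val jki.1).length < u + q - 1 := by
    by_contra hc; exact hmaxl ⟨hp1, by omega⟩
  have hmaxr := hmaxp (p ++ [true]) (List.prefix_append _ _)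
    (fun h => by simpa using congrArg List.length h) (by simp [IsNode, hnr])
  rw [S.itv_eq hnr, hor, Finset.Icc_subset_Icc_iff (by omega)] at hmaxr
  have hB : u ≤ S.offset p + (S.val jki.1).length := by
    by_contra hc; exact hmaxr ⟨by omega, by omega⟩
  -- children of p'
  have hnl' : S.nodeVar (p' ++ [false]) = some jkj.1 := by
    rw [S.nodeVar_append hvp', S.descend_cons hrj, if_neg Bool.false_ne_true, descend_nil]
  have hol' : S.offset (p' ++ [false]) = S.offset p' := by
    rw [S.offset_append hvp', S.offsetFrom_cons hrj, if_neg Bool.false_ne_true,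
      offsetFrom_nil]; omega
  have hnr' : S.nodeVar (p' ++ [true]) = some jkj.2 := by
    rw [S.nodeVar_append hvp', S.descend_cons hrj, if_pos rfl, descend_nil]
  have hor' : S.offset (p' ++ [true]) = S.offset p' + (S.val jkj.1).length := by
    rw [S.offset_append hvp', S.offsetFrom_cons hrj, if_pos rfl, offsetFrom_nil]; omega
  have hmaxl' := hmaxp' (p' ++ [false]) (List.prefix_append _ _)
    (fun h => by simpa using congrArg List.length h) (by simp [IsNode, hnl'])
  rw [S.itv_eq hnl', hol', Finset.Icc_subset_Icc_iff (by omega)] at hmaxl'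
  have hA' : S.offset p' + (S.val jkj.1).length < u + q := by
    by_contra hc; exact hmaxl' ⟨hp1', by omega⟩
  have hmaxr' := hmaxp' (p' ++ [true]) (List.prefix_append _ _)
    (fun h => by simpa using congrArg List.length h) (by simp [IsNode, hnr'])
  rw [S.itv_eq hnr', hor', Finset.Icc_subset_Icc_iff (by omega)] at hmaxr'
  have hB' : u + 1 ≤ S.offset p' + (S.val jkj.1).length := by
    by_contra hc; exact hmaxr' ⟨by omega, by omega⟩
  -- comparability
  have e1 : S.offsetFrom S.lastIdx p = S.offset p := rfl
  have e2 : S.offsetFrom S.lastIdx p' = S.offset p' := rfl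
  have hcomp := S.descend_comparable p S.lastIdx p' i j u hvp hvp'
    (by omega) (by omega) (by omega) (by omega)
  rcases hcomp with ⟨s, rfl⟩ | ⟨s, rfl⟩
  · -- p' = p ++ s : descendant case
    cases s with
    | nil =>
      rw [List.append_nil, hvp] at hvp'
      exact absurd (Option.some_injective _ hvp') hne
    | cons b t =>
      rw [S.nodeVar_append hvp, S.descend_cons hri] at hvp'
      have hofs : S.offset (p ++ b :: t) = S.offset p + S.offsetFrom i (b :: t) :=
        S.offset_append hvp _
      rw [S.offsetFrom_cons hri] at hofs
      cases b
      · rw [if_neg Bool.false_ne_true] at hvp' hofs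
        have hle := S.offsetFrom_add_length_le jki.1 t hvp'
        omega
      · rw [if_pos rfl] at hvp' hofs
        have hle := S.offsetFrom_add_length_le jki.2 t hvp'
        exact Or.inl ⟨by omega, by omega⟩
  · -- p = p' ++ s : ancestor case
    cases s with
    | nil =>
      rw [List.append_nil, hvp'] at hvp
      exact absurd (Option.some_injective _ hvp).symm hne
    | cons b t =>
      rw [S.nodeVar_append hvp', S.descend_cons hrj] at hvp
      have hofs : S.offset (p' ++ b :: t) = S.offset p' + S.offsetFrom j (b :: t) :=
        S.offset_append hvp' _
      rw [S.offsetFrom_cons hrj] at hofs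
      cases b
      · rw [if_neg Bool.false_ne_true] at hvp hofs
        have hle := S.offsetFrom_add_length_le jkj.1 t hvp
        have hal : S.offsetFrom jkj.1 t + (S.val i).length = (S.val jkj.1).length := by
          omega
        exact Or.inr ⟨(S.rm_eq_of_aligned q jkj.1 t hvp hal hLi hri (by omega)).symm,
          by omega⟩
      · rw [if_pos rfl] at hvp hofs
        omega

end SLP

/-- if `X_j` is a right `q`-gram neighbor of `X_i` and
`|val(X_{r(i)})| < q`, then `i = rm_q(X_{ℓ(j)})`; in particular the left
`q`-gram neighbor of `X_j` is uniquely determined, and `|val(X_{ℓ(j)})| ≥ q`. -/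
theorem stmt4 {α : Type} (q : ℕ) (hq : 2 ≤ q) (S : SLP α)
    (i j : Fin S.n) (jki jkj : Fin S.n × Fin S.n)
    (hri : S.rule i = Sum.inr jki) (hrj : S.rule j = Sum.inr jkj)
    (hnbr : S.RightNbr q i j) (hlen : (S.val jki.2).length < q) :
    i = S.rm q jkj.1 ∧ (∀ i', S.RightNbr q i' j → i' = i) ∧
      q ≤ (S.val jkj.1).length := by
  obtain ⟨jki', hri', hcase⟩ := S.key hq hrj hnbr
  rw [hri] at hri'
  injection hri' with h
  subst h
  rcases hcase with ⟨_, h2⟩ | ⟨h1, h2⟩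
  · omega
  · refine ⟨h1, ?_, h2⟩
    intro i' hn'
    obtain ⟨jki'', _, hcase'⟩ := S.key hq hrj hn'
    rcases hcase' with ⟨hlt, _⟩ | ⟨h1', _⟩
    · omega
    · exact h1'.trans h1.symm
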